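/- If u and v are coduplicate vertices in a simple graph G (N[u] = N[v]) and μ is a Laplacian eigenvalue of G with an eigenvector x satisfying x(u) ≠ x(v), then μ = deg(u) + 1. -/
import Mathlib

open Matrix

/-- If `u ≠ v` are coduplicate vertices of `G` (same closed neighborhood) and `μ` is a
Laplacian eigenvalue with an eigenvector `x` satisfying `x u ≠ x v`, then
`μ = deg u + 1`. -/
theorem lap_eigenvalue_eq_degree_succ_of_coduplicate {V : Type*} [Fintype V] [DecidableEq V]
    (G : SimpleGraph V) [DecidableRel G.Adj] (u v : V) (huv : u ≠ v)
    (hdup : G.neighborSet u ∪ {u} = G.neighborSet v ∪ {v}) (μ : ℝ) (x : V → ℝ)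
    (hx : x ≠ 0) (heig : G.lapMatrix ℝ *ᵥ x = μ • x) (hxuv : x u ≠ x v) :
    μ = G.degree u + 1 := by
  have hF : insert u (G.neighborFinset u) = insert v (G.neighborFinset v) := by
    apply Finset.coe_injective
    simpa [Set.union_comm, SimpleGraph.neighborFinset_def, Set.coe_toFinset] using hdup
  have hu : u ∉ G.neighborFinset u := by simp
  have hv : v ∉ G.neighborFinset v := by simp
  -- degrees equal
  have hdeg : G.degree u = G.degree v := by
    have := congrArg Finset.card hF
    rwa [Finset.card_insert_of_notMem hu, Finset.card_insert_of_notMem hv,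
      SimpleGraph.card_neighborFinset_eq_degree, SimpleGraph.card_neighborFinset_eq_degree,
      Nat.add_right_cancel_iff] at this
  -- sums relation
  have hsum : x u + ∑ w ∈ G.neighborFinset u, x w = x v + ∑ w ∈ G.neighborFinset v, x w := by
    have := congrArg (fun s : Finset V => ∑ w ∈ s, x w) hF
    simpa [Finset.sum_insert hu, Finset.sum_insert hv] using this
  have hequ := congrFun heig u
  have heqv := congrFun heig v
  rw [SimpleGraph.lapMatrix_mulVec_apply] at hequ heqv
  simp only [Pi.smul_apply, smul_eq_mul] at hequ heqv
  rw [hdeg] at hequ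
  have key : ((G.degree u : ℝ) + 1 - μ) * (x u - x v) = 0 := by
    rw [hdeg]; push_cast; nlinarith [hequ, heqv, hsum]
  rcases mul_eq_zero.mp key with h | h
  · linarith
  · exact absurd (sub_eq_zero.mp h) hxuv
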